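/- Let A > 0 and let ψ : ℝ → ℝ be differentiable with |ψ(u)| ≤ A (1 + u²)^{−1/2} and |ψ'(u)| ≤ A (1 + u²)^{−1} for all u ∈ ℝ. Then there exists a constant C > 0 depending only on A such that for every h > 0 and all a, b ∈ ℝ, ∫_ℝ ( ψ((s − a)/h) − ψ((s − b)/h) )² ds ≤ C |a − b|. -/

import Mathlib

open MeasureTheory Real

/-- Core estimate: for `δ > 0`, `∫ (ψ u - ψ (u - δ))² du ≤ 4A²(1+π) δ`. -/
lemma sq_L2_translates_core
    (A : ℝ) (hA : 0 < A) (ψ : ℝ → ℝ) (hψ_diff : Differentiable ℝ ψ)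
    (hψ : ∀ u : ℝ, |ψ u| ≤ A * (1 + u ^ 2) ^ (-(1:ℝ)/2))
    (hψ' : ∀ u : ℝ, |deriv ψ u| ≤ A * (1 + u ^ 2)⁻¹)
    (δ : ℝ) (hδ : 0 < δ) :
    ∫ u : ℝ, (ψ u - ψ (u - δ)) ^ 2 ≤ 4 * A ^ 2 * (1 + π) * δ := by
  set K : ℝ := 2 * A ^ 2 * min δ 2 with hK
  have hKpos : 0 < K := by
    have : 0 < min δ 2 := lt_min hδ (by norm_num)
    positivity
  set d : ℝ → ℝ := fun u => max 0 (max (-u) (u - δ)) with hd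
  -- pointwise bound
  have hpt : ∀ u : ℝ, (ψ u - ψ (u - δ)) ^ 2 ≤ K * (1 + d u ^ 2)⁻¹ := by
    intro u
    have hd0 : 0 ≤ d u := le_max_left _ _
    have hdabs : ∀ t ∈ Set.Icc (u - δ) u, d u ≤ |t| := by
      intro t ht
      refine max_le (abs_nonneg t) (max_le ?_ ?_)
      · exact le_trans (neg_le_neg ht.2) (neg_le_abs t)
      · exact le_trans ht.1 (le_abs_self t)
    have hdsq : ∀ t ∈ Set.Icc (u - δ) u, 1 + d u ^ 2 ≤ 1 + t ^ 2 := by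
      intro t ht
      have h1 := hdabs t ht
      have h2 : d u ^ 2 ≤ t ^ 2 := by
        have := sq_abs t
        nlinarith [abs_nonneg t]
      linarith
    have hpos : (0:ℝ) < 1 + d u ^ 2 := by positivity
    -- the two endpoints are in the interval
    have humem : u ∈ Set.Icc (u - δ) u := by constructor <;> linarith
    have huδmem : u - δ ∈ Set.Icc (u - δ) u := by constructor <;> linarith
    -- set up abbreviations
    set r : ℝ := (1 + d u ^ 2) ^ (-(1:ℝ)/2) with hr
    set p : ℝ := (1 + d u ^ 2)⁻¹ with hp
    have hr0 : 0 ≤ r := Real.rpow_nonneg (le_of_lt hpos) _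
    have hr1 : r ≤ 1 := Real.rpow_le_one_of_one_le_of_nonpos (by nlinarith) (by norm_num)
    have hp0 : 0 ≤ p := by positivity
    have hrr : r * r = p := by
      rw [hr, hp, ← Real.rpow_add hpos,
        show -(1:ℝ)/2 + -(1:ℝ)/2 = -(1:ℝ) by norm_num,
        Real.rpow_neg hpos.le, Real.rpow_one]
    -- MVT bound
    have hMVT : |ψ u - ψ (u - δ)| ≤ A * p * δ := by
      have hb : ∀ x ∈ Set.Ico (u - δ) u, ‖deriv ψ x‖ ≤ A * p := by
        intro x hx
        have hx' : x ∈ Set.Icc (u - δ) u := Set.Ico_subset_Icc_self hx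
        refine le_trans (hψ' x) ?_
        have := hdsq x hx'
        have hposx : (0:ℝ) < 1 + x ^ 2 := by positivity
        have : (1 + x ^ 2)⁻¹ ≤ p := by
          rw [hp]
          exact inv_anti₀ hpos this
        nlinarith
      have := norm_image_sub_le_of_norm_deriv_le_segment'
        (f := ψ) (f' := deriv ψ) (a := u - δ) (b := u)
        (fun x _ => (hψ_diff x).hasDerivAt.hasDerivWithinAt) hb u humem
      simpa [Real.norm_eq_abs, sub_sub_cancel] using this
    -- size bound for each value
    have hsize : ∀ t ∈ Set.Icc (u - δ) u, |ψ t| ≤ A * r := by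
      intro t ht
      refine le_trans (hψ t) ?_
      have h1 : (1 + t ^ 2) ^ (-(1:ℝ)/2) ≤ r := by
        rw [hr]
        exact Real.rpow_le_rpow_of_nonpos hpos (hdsq t ht) (by norm_num)
      nlinarith
    have hsum : |ψ u - ψ (u - δ)| ≤ 2 * A * r := by
      calc |ψ u - ψ (u - δ)| ≤ |ψ u| + |ψ (u - δ)| := abs_sub _ _
        _ ≤ A * r + A * r := add_le_add (hsize u humem) (hsize _ huδmem)
        _ = 2 * A * r := by ring
    have habs0 : (0 : ℝ) ≤ |ψ u - ψ (u - δ)| := abs_nonneg _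
    have hsq : (ψ u - ψ (u - δ)) ^ 2 = |ψ u - ψ (u - δ)| * |ψ u - ψ (u - δ)| := by
      rw [abs_mul_abs_self]; ring
    rcases le_total δ 2 with hδ2 | hδ2
    · have hmin : min δ 2 = δ := min_eq_left hδ2
      have h1 : |ψ u - ψ (u - δ)| * |ψ u - ψ (u - δ)| ≤ (A * p * δ) * (2 * A * r) :=
        mul_le_mul hMVT hsum habs0 (by positivity)
      rw [hsq, hK, hmin]
      nlinarith [h1, mul_nonneg (mul_nonneg (mul_nonneg (mul_nonneg hA.le hA.le) hp0) hδ.le)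
        (sub_nonneg.mpr hr1)]
    · have hmin : min δ 2 = 2 := min_eq_right hδ2
      have h1 : |ψ u - ψ (u - δ)| * |ψ u - ψ (u - δ)| ≤ (2 * A * r) * (2 * A * r) :=
        mul_le_mul hsum hsum habs0 (by positivity)
      rw [hsq, hK, hmin]
      nlinarith [h1, hrr, sq_nonneg A]
  -- the dominating integrable function
  set G : ℝ → ℝ := fun u =>
    Set.indicator (Set.Icc 0 δ) (fun _ => (1:ℝ)) u + ((1 + u ^ 2)⁻¹ + (1 + (u - δ) ^ 2)⁻¹)
    with hG
  have hGbound : ∀ u : ℝ, (1 + d u ^ 2)⁻¹ ≤ G u := by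
    intro u
    have hind0 : (0:ℝ) ≤ Set.indicator (Set.Icc 0 δ) (fun _ => (1:ℝ)) u :=
      Set.indicator_nonneg (fun _ _ => zero_le_one) u
    have ht1 : (0:ℝ) ≤ (1 + u ^ 2)⁻¹ := by positivity
    have ht2 : (0:ℝ) ≤ (1 + (u - δ) ^ 2)⁻¹ := by positivity
    have hd0 : 0 ≤ d u := le_max_left _ _
    rcases le_or_gt u 0 with hu | hu
    · have hdu : -u ≤ d u := le_trans (le_max_left _ _) (le_max_right _ _)
      have : (1 + d u ^ 2)⁻¹ ≤ (1 + u ^ 2)⁻¹ := by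
        apply inv_anti₀ (by positivity)
        nlinarith
      rw [hG]; dsimp only; linarith
    rcases le_or_gt δ u with hu2 | hu2
    · have hdu : u - δ ≤ d u := le_trans (le_max_right _ _) (le_max_right _ _)
      have : (1 + d u ^ 2)⁻¹ ≤ (1 + (u - δ) ^ 2)⁻¹ := by
        apply inv_anti₀ (by positivity)
        nlinarith
      rw [hG]; dsimp only; linarith
    · have hmem : u ∈ Set.Icc 0 δ := ⟨hu.le, hu2.le⟩
      have hind : Set.indicator (Set.Icc 0 δ) (fun _ => (1:ℝ)) u = 1 :=
        Set.indicator_of_mem hmem _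
      have : (1 + d u ^ 2)⁻¹ ≤ 1 := by
        rw [inv_le_one_iff₀]; right; nlinarith
      rw [hG]; dsimp only; rw [hind]; linarith
  have hind_int : Integrable (Set.indicator (Set.Icc 0 δ) (fun _ => (1:ℝ))) := by
    rw [integrable_indicator_iff measurableSet_Icc]
    exact integrableOn_const measure_Icc_lt_top.ne
  have h2_int : Integrable (fun u : ℝ => (1 + u ^ 2)⁻¹) := integrable_inv_one_add_sq
  have h3_int : Integrable (fun u : ℝ => (1 + (u - δ) ^ 2)⁻¹) :=
    integrable_inv_one_add_sq.comp_sub_right δ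
  have h23_int : Integrable (fun u : ℝ => (1 + u ^ 2)⁻¹ + (1 + (u - δ) ^ 2)⁻¹) :=
    h2_int.add h3_int
  have hG_int : Integrable G := hind_int.add h23_int
  have hG_val : ∫ u : ℝ, G u = δ + (π + π) := by
    rw [hG]
    simp only []
    rw [integral_add hind_int h23_int, integral_add h2_int h3_int]
    have e1 : ∫ u : ℝ, Set.indicator (Set.Icc 0 δ) (fun _ => (1:ℝ)) u = δ := by
      rw [integral_indicator_const (1:ℝ) measurableSet_Icc]
      simp [Real.volume_Icc, ENNReal.toReal_ofReal hδ.le, hδ.le]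
    have e3 : ∫ u : ℝ, (1 + (u - δ) ^ 2)⁻¹ = π := by
      rw [integral_sub_right_eq_self (fun u : ℝ => (1 + u ^ 2)⁻¹) δ]
      exact integral_univ_inv_one_add_sq
    rw [e1, integral_univ_inv_one_add_sq, e3]
  have hmono : ∫ u : ℝ, (ψ u - ψ (u - δ)) ^ 2 ≤ ∫ u : ℝ, K * G u := by
    apply integral_mono_of_nonneg
    · exact Filter.Eventually.of_forall fun u => sq_nonneg _
    · exact hG_int.const_mul K
    · refine Filter.Eventually.of_forall fun u => ?_
      exact le_trans (hpt u) (mul_le_mul_of_nonneg_left (hGbound u) hKpos.le)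
  have hKG : ∫ u : ℝ, K * G u = K * (δ + (π + π)) := by
    rw [integral_const_mul, hG_val]
  rw [hKG] at hmono
  refine le_trans hmono ?_
  rw [hK]
  rcases le_total δ 2 with hδ2 | hδ2
  · rw [min_eq_left hδ2]
    nlinarith [pi_pos, mul_nonneg (mul_nonneg (sq_nonneg A) hδ.le) (sub_nonneg.mpr hδ2)]
  · rw [min_eq_right hδ2]
    nlinarith [pi_pos, mul_nonneg (mul_nonneg (sq_nonneg A) pi_pos.le) (sub_nonneg.mpr hδ2)]

/-- Ordered version of the main theorem. -/
lemma sq_L2_translates_le_of_lt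
    (A : ℝ) (hA : 0 < A) (ψ : ℝ → ℝ) (hψ_diff : Differentiable ℝ ψ)
    (hψ : ∀ u : ℝ, |ψ u| ≤ A * (1 + u ^ 2) ^ (-(1:ℝ)/2))
    (hψ' : ∀ u : ℝ, |deriv ψ u| ≤ A * (1 + u ^ 2)⁻¹)
    (h : ℝ) (hh : 0 < h) (a b : ℝ) (hab : a < b) :
    ∫ s : ℝ, (ψ ((s - a) / h) - ψ ((s - b) / h)) ^ 2 ≤ 4 * A ^ 2 * (1 + π) * |a - b| := by
  set δ : ℝ := (b - a) / h with hδdef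
  have hδ : 0 < δ := div_pos (by linarith) hh
  set g : ℝ → ℝ := fun u => (ψ u - ψ (u - δ)) ^ 2 with hg
  have key : (fun s : ℝ => (ψ ((s - a) / h) - ψ ((s - b) / h)) ^ 2)
      = fun s : ℝ => (fun t : ℝ => g (t / h)) (s - a) := by
    funext s
    rw [hg]
    dsimp only
    have : (s - a) / h - δ = (s - b) / h := by
      rw [hδdef]; field_simp; ring
    rw [this]
  rw [key, integral_sub_right_eq_self (fun t : ℝ => g (t / h)) a,
    Measure.integral_comp_div g h]
  have hcore := sq_L2_translates_core A hA ψ hψ_diff hψ hψ' δ hδ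
  have habs : |a - b| = b - a := by rw [abs_sub_comm]; exact abs_of_pos (by linarith)
  rw [smul_eq_mul, abs_of_pos hh, habs]
  calc h * ∫ u : ℝ, g u ≤ h * (4 * A ^ 2 * (1 + π) * δ) :=
        mul_le_mul_of_nonneg_left hcore hh.le
    _ = 4 * A ^ 2 * (1 + π) * (b - a) := by
        rw [hδdef, mul_comm h, mul_assoc, div_mul_cancel₀ _ (ne_of_gt hh)]

/-- For a differentiable `ψ` with `|ψ(u)| ≤ A(1+u²)^{−1/2}` and `|ψ'(u)| ≤ A(1+u²)^{−1}`,
the squared `L²` distance between two translates on the same scale is Lipschitz in the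
translation: `∫ (ψ((s−a)/h) − ψ((s−b)/h))² ds ≤ C|a−b|`. -/
theorem sq_L2_translates_le
    (A : ℝ) (hA : 0 < A) (ψ : ℝ → ℝ) (hψ_diff : Differentiable ℝ ψ)
    (hψ : ∀ u : ℝ, |ψ u| ≤ A * (1 + u ^ 2) ^ (-(1:ℝ)/2))
    (hψ' : ∀ u : ℝ, |deriv ψ u| ≤ A * (1 + u ^ 2)⁻¹) :
    ∃ C : ℝ, 0 < C ∧ ∀ h : ℝ, 0 < h → ∀ a b : ℝ,
      ∫ s : ℝ, (ψ ((s - a) / h) - ψ ((s - b) / h)) ^ 2 ≤ C * |a - b| := by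
  refine ⟨4 * A ^ 2 * (1 + π), by positivity, ?_⟩
  intro h hh a b
  rcases lt_trichotomy a b with hab | hab | hab
  · simpa [mul_comm] using
      sq_L2_translates_le_of_lt A hA ψ hψ_diff hψ hψ' h hh a b hab
  · subst hab
    simp
  · have hswap : (fun s : ℝ => (ψ ((s - a) / h) - ψ ((s - b) / h)) ^ 2)
        = fun s : ℝ => (ψ ((s - b) / h) - ψ ((s - a) / h)) ^ 2 := by
      funext s; ring
    rw [hswap, abs_sub_comm]
    simpa [mul_comm] using
      sq_L2_translates_le_of_lt A hA ψ hψ_diff hψ hψ' h hh b a hab
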